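/- arXiv:1702.05933 — 3 statements merged into one kernel-verified Lean document; each statement's English description precedes it below -/
import Mathlib

section
/- Let (a_i)_{i∈ℕ} ⊂ ℝ be a bounded sequence with a_i → a. Let (Z_i)_{i∈ℕ} be independent random variables with Z_i ∼ N(a_i, 1). Then for every Borel set B ⊆ ℝ, the averages (1/n)∑_{i=1}^n P(Z_i ∈ B) converge to N(a,1)(B) as n → ∞. -/
open MeasureTheory ProbabilityTheory Filter Topology Real
open scoped ENNReal NNReal

lemma gauss_toReal (m : ℝ) (B : Set ℝ) :
    (gaussianReal m 1 B).toReal = ∫ x in B, gaussianPDFReal m 1 x := by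
  rw [gaussianReal_apply_eq_integral m one_ne_zero B, ENNReal.toReal_ofReal]
  exact integral_nonneg fun x => gaussianPDFReal_nonneg _ _ _

lemma gauss_cont {a : ℕ → ℝ} {c l : ℝ} (hbd : ∀ i, |a i| ≤ c)
    (ha : Tendsto a atTop (𝓝 l)) (B : Set ℝ) :
    Tendsto (fun i => (gaussianReal (a i) 1 B).toReal) atTop
      (𝓝 ((gaussianReal l 1 B).toReal)) := by
  simp only [gauss_toReal]
  refine tendsto_integral_of_dominated_convergence
    (fun x => Real.exp (c^2/2) * (gaussianPDFReal c 1 x + gaussianPDFReal (-c) 1 x))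
    (fun i => (measurable_gaussianPDFReal _ _).aestronglyMeasurable.restrict) ?_ ?_ ?_
  · exact (((integrable_gaussianPDFReal c 1).add
      (integrable_gaussianPDFReal (-c) 1)).const_mul _).restrict
  · intro i
    refine ae_of_all _ fun x => ?_
    rw [Real.norm_of_nonneg (gaussianPDFReal_nonneg _ _ _)]
    have h1 : -(x - a i)^2 / 2 ≤ -x^2/2 + c * |x| := by
      have habs : a i * x ≤ c * |x| := by
        calc a i * x ≤ |a i * x| := le_abs_self _
        _ = |a i| * |x| := abs_mul _ _
        _ ≤ c * |x| := mul_le_mul_of_nonneg_right (hbd i) (abs_nonneg x)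
      nlinarith [sq_nonneg (a i)]
    have key : Real.exp (-(x - a i)^2 / 2) ≤
        Real.exp (c^2/2) * (Real.exp (-(x - c)^2/2) + Real.exp (-(x - -c)^2/2)) := by
      have e1 : Real.exp (c^2/2) * Real.exp (-(x - c)^2/2) = Real.exp (-x^2/2 + c * x) := by
        rw [← Real.exp_add]; ring_nf
      have e2 : Real.exp (c^2/2) * Real.exp (-(x - -c)^2/2) = Real.exp (-x^2/2 + c * (-x)) := by
        rw [← Real.exp_add]; ring_nf
      rw [mul_add, e1, e2]
      rcases abs_cases x with ⟨hx, _⟩ | ⟨hx, _⟩ <;> rw [hx] at h1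
      · have := Real.exp_le_exp.mpr h1
        nlinarith [Real.exp_pos (-x^2/2 + c * (-x))]
      · have := Real.exp_le_exp.mpr h1
        nlinarith [Real.exp_pos (-x^2/2 + c * x)]
    simp only [gaussianPDFReal, NNReal.coe_one, mul_one]
    have hs : (0:ℝ) ≤ (√(2*π))⁻¹ := by positivity
    calc (√(2*π))⁻¹ * Real.exp (-(x - a i)^2 / 2)
        ≤ (√(2*π))⁻¹ * (Real.exp (c^2/2) *
            (Real.exp (-(x - c)^2/2) + Real.exp (-(x - -c)^2/2))) :=
          mul_le_mul_of_nonneg_left key hs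
      _ = _ := by ring
  · refine ae_of_all _ fun x => ?_
    have : Continuous fun m : ℝ => gaussianPDFReal m 1 x := by
      unfold gaussianPDFReal
      continuity
    exact (this.tendsto l).comp ha

/-- Let `(a i)` be a bounded real sequence with `a i → l`, and let `(Z i)` be
independent random variables with `Z i ∼ N(a i, 1)`.  Then for every Borel set
`B ⊆ ℝ` the averages `(1/n) ∑_{i<n} P(Z i ∈ B)` converge to `N(l,1)(B)`. -/
theorem cesaro_gaussian_probabilities
    {Ω : Type*} [MeasurableSpace Ω] (μ : Measure Ω) [IsProbabilityMeasure μ]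
    (a : ℕ → ℝ) (c : ℝ) (hbd : ∀ i, |a i| ≤ c) (l : ℝ)
    (ha : Tendsto a atTop (𝓝 l))
    (Z : ℕ → Ω → ℝ) (hmeas : ∀ i, Measurable (Z i))
    (hindep : iIndepFun Z μ)
    (hlaw : ∀ i, μ.map (Z i) = gaussianReal (a i) 1)
    (B : Set ℝ) (hB : MeasurableSet B) :
    Tendsto (fun n : ℕ => ((1 : ℝ) / n) * ∑ i ∈ Finset.range n, (μ (Z i ⁻¹' B)).toReal)
      atTop (𝓝 ((gaussianReal l 1 B).toReal)) := by
  have hP : ∀ i, μ (Z i ⁻¹' B) = gaussianReal (a i) 1 B := fun i => by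
    rw [← hlaw i, Measure.map_apply (hmeas i) hB]
  simp only [hP, one_div]
  exact (gauss_cont hbd ha B).cesaro
end

section
/- Let (Z, d) be a metric space, n ∈ ℕ, and w = (z_1,…,z_n), w' = (z'_1,…,z'_n) ∈ Z^n. If d_n(w, w') ≤ δ for the metric d_n(w, w') = inf{ ε > 0 : #{i : d(z_i, z'_i) ≥ ε}/n ≤ ε }, then the Prohorov distance between the empirical measures satisfies π((1/n)∑_{i=1}^n δ_{z_i}, (1/n)∑_{i=1}^n δ_{z'_i}) ≤ δ. -/
open scoped ENNReal
open Classical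

/-- The gross-error metric on `Z^n`:
`d_n(w,w') = inf{ ε > 0 : #{i : d(w i, w' i) ≥ ε}/n ≤ ε }`. -/
noncomputable def dn {Z : Type*} [MetricSpace Z] (n : ℕ) (w w' : Fin n → Z) : ℝ :=
  sInf {ε : ℝ | 0 < ε ∧
    (((Finset.univ.filter fun i : Fin n => ε ≤ dist (w i) (w' i)).card : ℝ) / n ≤ ε)}

open MeasureTheory

/-- The Prohorov distance between two measures on a metric space:
`π(P,Q) = inf{ ε > 0 : P(B) ≤ Q(Bᵉ) + ε for all Borel B }`. -/
noncomputable def prohorov {Z : Type*} [MetricSpace Z] [MeasurableSpace Z]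
    (P Q : Measure Z) : ℝ :=
  sInf {ε : ℝ | 0 < ε ∧ ∀ B : Set Z, MeasurableSet B →
    P B ≤ Q (Metric.thickening ε B) + ENNReal.ofReal ε}

/-- If `d_n(w, w') ≤ δ` then the Prohorov distance between the corresponding
empirical measures is at most `δ`. -/
theorem prohorov_empirical_le_of_dn_le
    {Z : Type*} [MetricSpace Z] [MeasurableSpace Z] [BorelSpace Z]
    (n : ℕ) (hn : 0 < n) (w w' : Fin n → Z) (δ : ℝ) (h : dn n w w' ≤ δ) :
    prohorov ((n : ℝ≥0∞)⁻¹ • ∑ i, Measure.dirac (w i))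
      ((n : ℝ≥0∞)⁻¹ • ∑ i, Measure.dirac (w' i)) ≤ δ := by
  have hn' : (0:ℝ) < n := Nat.cast_pos.mpr hn
  refine le_trans (csInf_le_csInf ?_ ?_ ?_) h
  · exact ⟨0, fun x hx => le_of_lt hx.1⟩
  · refine ⟨1, one_pos, ?_⟩
    rw [div_le_one hn']
    exact_mod_cast (Finset.card_filter_le _ _).trans_eq (by simp)
  · rintro ε ⟨hε, hcard⟩
    refine ⟨hε, fun B hB => ?_⟩
    have hmeas : ∀ (v : Fin n → Z) (S : Set Z), MeasurableSet S →
        ((n : ℝ≥0∞)⁻¹ • ∑ i, Measure.dirac (v i)) S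
        = (n : ℝ≥0∞)⁻¹ * ((Finset.univ.filter fun i : Fin n => v i ∈ S).card : ℝ≥0∞) := by
      intro v S hS
      simp [Measure.smul_apply, MeasureTheory.Measure.finset_sum_apply,
        Measure.dirac_apply' _ hS, Set.indicator_apply, smul_eq_mul, Finset.sum_boole]
    rw [hmeas w B hB, hmeas w' _ Metric.isOpen_thickening.measurableSet]
    set a := (Finset.univ.filter fun i : Fin n => w i ∈ B)
    set b := (Finset.univ.filter fun i : Fin n => w' i ∈ Metric.thickening ε B)
    set c := (Finset.univ.filter fun i : Fin n => ε ≤ dist (w i) (w' i))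
    have hsub : a ⊆ b ∪ c := by
      intro i hi
      simp only [a, b, c, Finset.mem_filter, Finset.mem_union, Finset.mem_univ, true_and] at *
      by_cases hd : ε ≤ dist (w i) (w' i)
      · exact Or.inr hd
      · push_neg at hd
        exact Or.inl (Metric.mem_thickening_iff.mpr ⟨w i, hi, by rwa [dist_comm]⟩)
    have hcards : (a.card : ℝ≥0∞) ≤ (b.card : ℝ≥0∞) + (c.card : ℝ≥0∞) := by
      exact_mod_cast le_trans (Finset.card_le_card hsub) (Finset.card_union_le _ _)
    have hc : (n : ℝ≥0∞)⁻¹ * (c.card : ℝ≥0∞) ≤ ENNReal.ofReal ε := by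
      have : (n : ℝ≥0∞)⁻¹ * (c.card : ℝ≥0∞) = ENNReal.ofReal ((c.card : ℝ) / n) := by
        rw [ENNReal.ofReal_div_of_pos hn', ENNReal.ofReal_natCast, ENNReal.ofReal_natCast,
          div_eq_mul_inv, mul_comm]
      rw [this]
      exact ENNReal.ofReal_le_ofReal hcard
    calc (n : ℝ≥0∞)⁻¹ * (a.card : ℝ≥0∞)
        ≤ (n : ℝ≥0∞)⁻¹ * ((b.card : ℝ≥0∞) + (c.card : ℝ≥0∞)) := by
          exact mul_le_mul_right hcards _
      _ = (n : ℝ≥0∞)⁻¹ * (b.card : ℝ≥0∞) + (n : ℝ≥0∞)⁻¹ * (c.card : ℝ≥0∞) := by ring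
      _ ≤ (n : ℝ≥0∞)⁻¹ * (b.card : ℝ≥0∞) + ENNReal.ofReal ε := add_le_add_right hc _
end

section
/- Let (Z, d) be a totally bounded metric space. Then the set BL_1(Z) of functions f : Z → ℝ with |f|_Lip + ‖f‖_∞ ≤ 1 is separable with respect to the supremum norm ‖·‖_∞. -/
/-- The set of bounded Lipschitz functions on `Z` with BL-norm
(Lipschitz seminorm plus sup norm) at most `1`. -/
def BL1 (Z : Type*) [MetricSpace Z] : Set (Z → ℝ) :=
  {f | ∃ K C : ℝ, 0 ≤ K ∧ 0 ≤ C ∧ K + C ≤ 1 ∧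
    (∀ x y : Z, |f x - f y| ≤ K * dist x y) ∧ (∀ x : Z, |f x| ≤ C)}

lemma BL1_finite_net {Z : Type*} [MetricSpace Z]
    (hZ : TotallyBounded (Set.univ : Set Z)) {ε : ℝ} (hε : 0 < ε) :
    ∃ F : Set (Z → ℝ), F.Finite ∧ F ⊆ BL1 Z ∧
      ∀ f ∈ BL1 Z, ∃ g ∈ F, ∀ x : Z, |f x - g x| ≤ ε := by
  have hε3 : 0 < ε / 3 := by linarith
  -- finite ε/3 net of Z
  obtain ⟨t, ht, hcov⟩ := Metric.totallyBounded_iff.mp hZ (ε / 3) hε3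
  haveI : Fintype ↥t := ht.fintype
  -- restriction map
  set Φ : (Z → ℝ) → (↥t → ℝ) := fun f z => f z with hΦ
  -- image of BL1 is totally bounded (contained in compact cube)
  have hsub : Φ '' BL1 Z ⊆ Set.pi Set.univ (fun _ : ↥t => Set.Icc (-1 : ℝ) 1) := by
    rintro _ ⟨f, ⟨K, C, hK, hC, hKC, _, hfC⟩, rfl⟩ z _
    have := hfC z
    have h1 : C ≤ 1 := by linarith
    constructor <;> [nlinarith [abs_nonneg (f z), neg_abs_le (f ↑z)];
      nlinarith [le_abs_self (f ↑z)]]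
  have hcpt : IsCompact (Set.pi Set.univ (fun _ : ↥t => Set.Icc (-1 : ℝ) 1)) :=
    isCompact_univ_pi fun _ => isCompact_Icc
  have htb : TotallyBounded (Φ '' BL1 Z) :=
    (hcpt.totallyBounded).subset hsub
  -- finite ε/3 net of the image, inside the image
  obtain ⟨u, hu_sub, hu_fin, hu_cov⟩ :=
    totallyBounded_iff_subset.mp htb {p | dist p.1 p.2 < ε / 3}
      (Metric.dist_mem_uniformity hε3)
  -- choose preimages
  have hchoice : ∀ p ∈ u, ∃ f ∈ BL1 Z, Φ f = p := by
    intro p hp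
    obtain ⟨f, hf, hfp⟩ := hu_sub hp
    exact ⟨f, hf, hfp⟩
  choose! sel hsel1 hsel2 using hchoice
  refine ⟨sel '' u, hu_fin.image _, ?_, ?_⟩
  · rintro _ ⟨p, hp, rfl⟩; exact hsel1 p hp
  · rintro f hf
    obtain ⟨K, C, hK, hC, hKC, hfK, hfC⟩ := hf
    have hΦf : Φ f ∈ ⋃ y ∈ u, {x | dist x y < ε / 3} :=
      hu_cov ⟨f, ⟨K, C, hK, hC, hKC, hfK, hfC⟩, rfl⟩
    obtain ⟨p, hp, hdist⟩ := Set.mem_iUnion₂.mp hΦf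
    refine ⟨sel p, ⟨p, hp, rfl⟩, fun x => ?_⟩
    obtain ⟨K', C', hK', hC', hKC', hgK, hgC⟩ := hsel1 p hp
    -- x is within ε/3 of some z ∈ t
    have hx : x ∈ ⋃ y ∈ t, Metric.ball y (ε / 3) := hcov (Set.mem_univ x)
    obtain ⟨z, hz, hxz⟩ := Set.mem_iUnion₂.mp hx
    have hxz' : dist x z < ε / 3 := Metric.mem_ball.mp hxz
    -- coordinate bound at z
    have hcoord : dist (Φ f ⟨z, hz⟩) (p ⟨z, hz⟩) ≤ dist (Φ f) p :=
      dist_le_pi_dist (Φ f) p ⟨z, hz⟩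
    have hz3 : |f z - sel p z| < ε / 3 := by
      have hsp : Φ (sel p) = p := hsel2 p hp
      have hdist' : dist (Φ f) p < ε / 3 := hdist
      rw [← hsp] at hcoord hdist'
      have : dist (f z) (sel p z) < ε / 3 := lt_of_le_of_lt hcoord hdist'
      simpa [Real.dist_eq] using this
    have h1 : |f x - f z| ≤ K * dist x z := hfK x z
    have h2 : |sel p z - sel p x| ≤ K' * dist z x := hgK z x
    have hK1 : K ≤ 1 := by linarith
    have hK'1 : K' ≤ 1 := by linarith
    have hd : dist x z ≥ 0 := dist_nonneg
    have hdzx : dist z x = dist x z := dist_comm z x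
    calc |f x - sel p x|
        ≤ |f x - f z| + |f z - sel p z| + |sel p z - sel p x| := by
          have := abs_sub_le (f x) (f z) (sel p x)
          have := abs_sub_le (f z) (sel p z) (sel p x)
          nlinarith [abs_sub_le (f x) (f z) (sel p x), abs_sub_le (f z) (sel p z) (sel p x)]
      _ ≤ ε := by nlinarith

/-- If `(Z,d)` is totally bounded, then `BL₁(Z)` is separable for the sup norm:
there is a countable subset which is uniformly dense in `BL₁(Z)`. -/
theorem BL1_separable {Z : Type*} [MetricSpace Z]
    (hZ : TotallyBounded (Set.univ : Set Z)) :
    ∃ D : Set (Z → ℝ), D.Countable ∧ D ⊆ BL1 Z ∧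
      ∀ f ∈ BL1 Z, ∀ ε > (0 : ℝ), ∃ g ∈ D, ∀ x : Z, |f x - g x| ≤ ε := by
  have key : ∀ n : ℕ, ∃ F : Set (Z → ℝ), F.Finite ∧ F ⊆ BL1 Z ∧
      ∀ f ∈ BL1 Z, ∃ g ∈ F, ∀ x : Z, |f x - g x| ≤ 1 / (n + 1) := by
    intro n
    exact BL1_finite_net hZ (by positivity)
  choose F hFfin hFsub hFnet using key
  refine ⟨⋃ n, F n, Set.countable_iUnion fun n => (hFfin n).countable, ?_, ?_⟩
  · exact Set.iUnion_subset fun n => hFsub n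
  · intro f hf ε hε
    obtain ⟨n, hn⟩ := exists_nat_one_div_lt hε
    obtain ⟨g, hg, hgf⟩ := hFnet n f hf
    exact ⟨g, Set.mem_iUnion.mpr ⟨n, hg⟩, fun x => (hgf x).trans hn.le⟩
end
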